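/- If u, v ∈ Σ_2 are distinct concatenations of Morse blocks of rapidly growing lengths (u, v ∈ D as in the constructions of Theorems 1 and 2) and 0 ≤ p < q are integers, then liminf_{k→∞} d(σ^{k+p}(u), σ^{k+q}(v)) > 0. Consequently (σ^p(u), σ^q(v)) is not a proximal pair. -/

import Mathlib

open Filter

/-- Metric on Σ₂ = {0,1}^ℕ : d(u,v) = Σ_{i≥1} δ(u_i,v_i)/2^i (coordinates 0-indexed). -/
noncomputable def dist2 (u v : ℕ → Bool) : ℝ :=
  ∑' i : ℕ, if u i = v i then 0 else (1/2)^(i+1)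

/-- The shift map. -/
def shift (u : ℕ → Bool) : ℕ → Bool := fun n => u (n + 1)

/-- Binary complement of a word. -/
def wordCompl (B : List Bool) : List Bool := B.map (fun b => !b)

/-- Morse blocks: M_0 = 0, M_{i+1} = M_i followed by its complement. -/
def morseBlock : ℕ → List Bool
  | 0 => [false]
  | i + 1 => morseBlock i ++ wordCompl (morseBlock i)

/-- The Morse sequence, the limit of the Morse blocks. -/
def morse : ℕ → Bool := fun n => (morseBlock (n + 1)).getD n false

open Classical in
/-- Infinite concatenation of a sequence of (nonempty) blocks. -/
noncomputable def concatSeq (B : ℕ → List Bool) (k : ℕ) : Bool :=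
  if h : ∃ n, ∑ i ∈ Finset.range n, (B i).length ≤ k ∧
      k < ∑ i ∈ Finset.range (n + 1), (B i).length then
    (B h.choose).getD (k - ∑ i ∈ Finset.range h.choose, (B i).length) false
  else false

open Classical in
/-- Lower distributional function. -/
noncomputable def Phi (x y : ℕ → Bool) (δ : ℝ) : ℝ :=
  liminf (fun m : ℕ =>
    (((Finset.Ioo 0 m).filter (fun k => dist2 (shift^[k] x) (shift^[k] y) < δ)).card : ℝ) / m)
    atTop

open Classical in
/-- Upper distributional function. -/
noncomputable def PhiStar (x y : ℕ → Bool) (ε : ℝ) : ℝ :=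
  limsup (fun m : ℕ =>
    (((Finset.Ioo 0 m).filter (fun k => dist2 (shift^[k] x) (shift^[k] y) < ε)).card : ℝ) / m)
    atTop

/-- A Li-Yorke scrambled triple. -/
noncomputable def ScrTriple (x y z : ℕ → Bool) : Prop :=
  x ≠ y ∧ x ≠ z ∧ y ≠ z ∧
  liminf (fun k : ℕ => max (max (dist2 (shift^[k] x) (shift^[k] y))
      (dist2 (shift^[k] x) (shift^[k] z))) (dist2 (shift^[k] y) (shift^[k] z))) atTop = 0 ∧
  0 < limsup (fun k : ℕ => min (min (dist2 (shift^[k] x) (shift^[k] y))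
      (dist2 (shift^[k] x) (shift^[k] z))) (dist2 (shift^[k] y) (shift^[k] z))) atTop

/-- Concatenation of Morse blocks M_{a j}, complemented where `e j = true`. -/
noncomputable def blockPt (a : ℕ → ℕ) (e : ℕ → Bool) : ℕ → Bool :=
  concatSeq (fun j => if e j then wordCompl (morseBlock (a j)) else morseBlock (a j))

/-- A point occurring as in Theorem 2: odd-position blocks fixed, even-position blocks chosen by α. -/
noncomputable def xpt (a : ℕ → ℕ) (α : ℕ → Bool) : ℕ → Bool :=
  blockPt a (fun j => if j % 2 = 0 then α (j / 2) else false)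

/-- Cantor set predicate. -/
def IsCantorSet (C : Set (ℕ → Bool)) : Prop :=
  C.Nonempty ∧ IsCompact C ∧ Perfect C ∧ IsTotallyDisconnected C

/-- The Morse minimal set: orbit closure of the Morse sequence. -/
def morseMinimal : Set (ℕ → Bool) := closure {y | ∃ k : ℕ, y = shift^[k] morse}


def tm : ℕ → Bool
  | 0 => false
  | (n+1) => if (n+1) % 2 = 0 then tm ((n+1)/2) else !tm ((n+1)/2)
  decreasing_by all_goals exact Nat.div_lt_self (Nat.succ_pos _) (by norm_num)

lemma tm_two_mul (k : ℕ) : tm (2*k) = tm k := by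
  cases k with
  | zero => rfl
  | succ m =>
    have h : 2*(m+1) = (2*m+1)+1 := by ring
    rw [h, tm]
    have h1 : (2*m+1+1) % 2 = 0 := by omega
    have h2 : (2*m+1+1) / 2 = m+1 := by omega
    simp [h1, h2]

lemma tm_two_mul_add_one (k : ℕ) : tm (2*k+1) = !tm k := by
  rw [tm]
  have h1 : (2*k+1) % 2 = 1 := by omega
  have h2 : (2*k+1) / 2 = k := by omega
  simp [h1, h2]

lemma tm_no_three (x : ℕ) : ¬(tm x = tm (x+1) ∧ tm (x+1) = tm (x+2)) := by
  rintro ⟨h1, h2⟩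
  rcases Nat.even_or_odd x with ⟨t, ht⟩ | ⟨t, ht⟩
  · subst ht
    rw [show t+t = 2*t by ring] at h1
    rw [show 2*t+1 = 2*t+1 from rfl, tm_two_mul_add_one, tm_two_mul] at h1
    simp at h1
  · subst ht
    rw [show 2*t+1+1 = 2*(t+1) by ring, show 2*t+1+2 = 2*(t+1)+1 by ring,
      tm_two_mul, tm_two_mul_add_one] at h2
    -- h2 : tm (t+1) = !tm (t+1)? no: h2 : tm (2(t+1)) = tm(2(t+1)+1)
    simp at h2

lemma tm_adj (m : ℕ) (hm : m % 2 = 0) : tm (m+1) = !tm m := by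
  obtain ⟨t, rfl⟩ : ∃ t, m = 2*t := ⟨m/2, by omega⟩
  rw [tm_two_mul_add_one, tm_two_mul]

lemma tm_no_rep : ∀ r, 1 ≤ r → ∀ n, ¬(∀ j < 8*r, tm (n+j) = tm (n+j+r)) := by
  intro r
  induction r using Nat.strong_induction_on with
  | _ r IH =>
    intro hr n h
    rcases Nat.even_or_odd r with ⟨s, hs⟩ | ⟨so, hso⟩
    · -- even case
      have hs' : r = 2*s := by omega
      have hs1 : 1 ≤ s := by omega
      set k0 := (n+1)/2 with hk0
      apply IH s (by omega) hs1 k0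
      intro j hj
      have h2k : 2*(k0+j) ≥ n := by omega
      have hlt : 2*(k0+j) - n < 8*r := by omega
      have := h (2*(k0+j) - n) hlt
      rw [show n + (2*(k0+j) - n) = 2*(k0+j) by omega,
          show 2*(k0+j) + r = 2*(k0+j+s) by omega,
          tm_two_mul, tm_two_mul] at this
      exact this
    · -- odd case
      -- m0 = smallest even ≥ n
      set m0 := n + n % 2 with hm0
      have hm0e : m0 % 2 = 0 := by omega
      have hm0n : m0 - n ≤ 1 := by omega
      -- k' with 2*k'+1 = m0 + r
      obtain ⟨k', hk'⟩ : ∃ k', m0 + r = 2*k'+1 := ⟨(m0+r)/2, by omega⟩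
      have key : ∀ i : ℕ, i ≤ 1 → tm (k'+i) = tm (k'+i+1) := by
        intro i hi
        have e1 := h (m0 + 2*i - n) (by omega)
        have e2 := h (m0 + 2*i + 1 - n) (by omega)
        rw [show n + (m0 + 2*i - n) = m0 + 2*i by omega] at e1
        rw [show n + (m0 + 2*i + 1 - n) = m0 + 2*i + 1 by omega] at e2
        have hne : tm (m0 + 2*i + 1) = !tm (m0+2*i) := tm_adj _ (by omega)
        -- so tm(m0+2i+r) ≠ tm(m0+2i+1+r)
        have hne2 : tm (m0 + 2*i + 1 + r) = !tm (m0 + 2*i + r) := by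
          rw [← e1, ← e2, hne]
        rw [show m0 + 2*i + r = 2*(k'+i)+1 by omega,
            show m0 + 2*i + 1 + r = 2*(k'+i+1) by omega,
            tm_two_mul, tm_two_mul_add_one] at hne2
        have : tm (k'+i+1) = tm (k'+i) := by simpa using hne2
        exact this.symm
      exact tm_no_three k' ⟨key 0 (by omega), by simpa [show k'+1+1 = k'+2 by ring] using key 1 (by omega)⟩

lemma tm_no_rep2 : ∀ r, 1 ≤ r → ∀ x0 (c : Bool), ¬(∀ t < 18*r, tm (x0+t) = xor c (tm (x0+t+r))) := by
  intro r hr x0 c h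
  cases c with
  | false =>
    apply tm_no_rep r hr x0
    intro j hj
    simpa using h j (by omega)
  | true =>
    apply tm_no_rep (2*r) (by omega) x0
    intro j hj
    have e1 := h j (by omega)
    have e2 := h (j+r) (by omega)
    simp only [Bool.true_xor] at e1 e2
    rw [show x0 + (j+r) = x0 + j + r by ring] at e2
    rw [e1, e2, show x0 + j + r + r = x0 + j + 2*r by ring, Bool.not_not]

lemma morseBlock_length (i : ℕ) : (morseBlock i).length = 2^i := by
  induction i with
  | zero => rfl
  | succ n ih => simp [morseBlock, wordCompl, ih]; ring

lemma tm_pow_add : ∀ i m, m < 2^i → tm (2^i + m) = !tm m := by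
  intro i
  induction i with
  | zero =>
    intro m hm
    interval_cases m
    rw [show 2^0 + 0 = 2*0+1 by norm_num, tm_two_mul_add_one]
  | succ i ih =>
    intro m hm
    rcases Nat.even_or_odd m with ⟨t, rfl⟩ | ⟨t, rfl⟩
    · rw [show 2^(i+1) + (t+t) = 2*(2^i + t) by ring, tm_two_mul,
        show t+t = 2*t by ring, tm_two_mul]
      exact ih t (by omega)
    · rw [show 2^(i+1) + (2*t+1) = 2*(2^i + t)+1 by ring, tm_two_mul_add_one,
        tm_two_mul_add_one]
      rw [ih t (by omega)]
lemma morseBlock_getD : ∀ i, ∀ n < 2^i, (morseBlock i).getD n false = tm n := by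
  intro i
  induction i with
  | zero =>
    intro n hn
    interval_cases n
    simp [morseBlock, tm]
  | succ i ih =>
    intro n hn
    rw [morseBlock]
    rcases lt_or_ge n (2^i) with h | h
    · rw [List.getD_append _ _ _ _ (by rw [morseBlock_length]; exact h)]
      exact ih n h
    · have hlen : (morseBlock i).length = 2^i := morseBlock_length i
      have hm : n - 2^i < 2^i := by omega
      rw [List.getD_append_right _ _ _ _ (by omega)]
      rw [hlen]
      have : (wordCompl (morseBlock i)).getD (n - 2^i) false
          = !((morseBlock i).getD (n-2^i) false) := by
        unfold wordCompl
        rw [List.getD_eq_getElem?_getD, List.getD_eq_getElem?_getD,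
          List.getElem?_map]
        rcases List.getElem?_eq_getElem (l := morseBlock i) (i := n - 2^i) (by omega) with h'
        rw [h']
        simp
      rw [this, ih _ hm, ← tm_pow_add i _ hm]
      congr 1
      omega

section
variable (B : ℕ → List Bool) (hB : ∀ i, 0 < (B i).length)

lemma partialSum_mono : Monotone (fun n => ∑ i ∈ Finset.range n, (B i).length) := by
  intro m n hmn
  exact Finset.sum_le_sum_of_subset (Finset.range_subset_range.2 hmn)

lemma concatSeq_eval (n k : ℕ)
    (h1 : ∑ i ∈ Finset.range n, (B i).length ≤ k)
    (h2 : k < ∑ i ∈ Finset.range (n+1), (B i).length) :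
    concatSeq B k = (B n).getD (k - ∑ i ∈ Finset.range n, (B i).length) false := by
  have hex : ∃ n, ∑ i ∈ Finset.range n, (B i).length ≤ k ∧
      k < ∑ i ∈ Finset.range (n + 1), (B i).length := ⟨n, h1, h2⟩
  rw [concatSeq, dif_pos hex]
  have hc := hex.choose_spec
  set m := hex.choose
  have : m = n := by
    by_contra hne
    rcases lt_or_gt_of_ne hne with h | h
    · have : (∑ i ∈ Finset.range (m+1), (B i).length) ≤ ∑ i ∈ Finset.range n, (B i).length :=
        Finset.sum_le_sum_of_subset (Finset.range_subset_range.2 h)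
      omega
    · have : (∑ i ∈ Finset.range (n+1), (B i).length) ≤ ∑ i ∈ Finset.range m, (B i).length :=
        Finset.sum_le_sum_of_subset (Finset.range_subset_range.2 h)
      omega
  rw [this]
end

lemma blockPt_eval (a : ℕ → ℕ) (e : ℕ → Bool) (j m : ℕ)
    (h1 : ∑ i ∈ Finset.range j, 2^(a i) ≤ m)
    (h2 : m < ∑ i ∈ Finset.range (j+1), 2^(a i)) :
    blockPt a e m = xor (e j) (tm (m - ∑ i ∈ Finset.range j, 2^(a i))) := by
  have hlen : ∀ i, ((fun j => if e j then wordCompl (morseBlock (a j)) else morseBlock (a j)) i).length = 2^(a i) := by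
    intro i
    by_cases h : e i <;> simp [h, wordCompl, morseBlock_length]
  have hsums : ∀ n, ∑ i ∈ Finset.range n, ((fun j => if e j then wordCompl (morseBlock (a j)) else morseBlock (a j)) i).length = ∑ i ∈ Finset.range n, 2^(a i) := by
    intro n; exact Finset.sum_congr rfl (fun i _ => hlen i)
  rw [blockPt, concatSeq_eval _ j m (by rw [hsums]; exact h1) (by rw [hsums]; exact h2), hsums]
  set x := m - ∑ i ∈ Finset.range j, 2^(a i) with hx
  have hxlt : x < 2^(a j) := by
    have := h2
    rw [Finset.sum_range_succ] at this
    omega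
  by_cases h : e j
  · rw [show (if e j then wordCompl (morseBlock (a j)) else morseBlock (a j)) = wordCompl (morseBlock (a j)) from if_pos h]
    have : (wordCompl (morseBlock (a j))).getD x false = !((morseBlock (a j)).getD x false) := by
      unfold wordCompl
      rw [List.getD_eq_getElem?_getD, List.getD_eq_getElem?_getD, List.getElem?_map]
      rcases List.getElem?_eq_getElem (l := morseBlock (a j)) (i := x) (by rw [morseBlock_length]; exact hxlt) with h'
      rw [h']
      simp
    rw [this, morseBlock_getD _ _ hxlt]
    simp [h]
  · rw [show (if e j then wordCompl (morseBlock (a j)) else morseBlock (a j)) = morseBlock (a j) from if_neg h]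
    rw [morseBlock_getD _ _ hxlt]
    simp [h]

lemma xor_helper : ∀ (c d A B : Bool), (xor c A) = (xor d B) → A = xor (xor c d) B := by decide

lemma geo_summable : Summable (fun i : ℕ => ((1:ℝ)/2)^(i+1)) := by
  have h := summable_geometric_two.mul_right (1/2)
  exact h.congr (fun i => (pow_succ _ i).symm)

lemma dist2_summable (u v : ℕ → Bool) :
    Summable (fun i : ℕ => if u i = v i then (0:ℝ) else (1/2)^(i+1)) := by
  apply Summable.of_nonneg_of_le (fun i => by positivity) (fun i => ?_) geo_summable
  by_cases h : u i = v i
  · rw [if_pos h]; positivity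
  · rw [if_neg h]

lemma dist2_single (u v : ℕ → Bool) (i : ℕ) (h : u i ≠ v i) :
    ((1:ℝ)/2)^(i+1) ≤ dist2 u v := by
  have h2 := Summable.le_tsum (dist2_summable u v) i (fun j _ => by positivity)
  rw [if_neg h] at h2
  exact h2

lemma dist2_le_one (u v : ℕ → Bool) : dist2 u v ≤ 1 := by
  have h1 : dist2 u v ≤ ∑' i : ℕ, ((1:ℝ)/2)^(i+1) := by
    apply Summable.tsum_le_tsum (fun i => ?_) (dist2_summable u v) geo_summable
    by_cases h : u i = v i
    · rw [if_pos h]; positivity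
    · rw [if_neg h]
  have h2 : ∑' i : ℕ, ((1:ℝ)/2)^(i+1) = 1 := by
    have h3 : ∑' i : ℕ, ((1:ℝ)/2)^(i+1) = (∑' i : ℕ, ((1:ℝ)/2)^i) * (1/2) := by
      rw [← tsum_mul_right]
      exact tsum_congr (fun i => pow_succ _ i)
    rw [h3, tsum_geometric_two]
    norm_num
  linarith

lemma shift_iter (k : ℕ) (u : ℕ → Bool) (n : ℕ) : shift^[k] u n = u (n + k) := by
  induction k generalizing u with
  | zero => rfl
  | succ m ih =>
    rw [Function.iterate_succ_apply, ih]
    show u (n + m + 1) = u (n + (m + 1))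
    congr 1


theorem stmt13 (a : ℕ → ℕ) (e f : ℕ → Bool) (hmono : StrictMono a) (hpos : ∀ n, 0 < a n)
    (hratio : Tendsto (fun n => (a n : ℝ) / (a (n + 1) : ℝ)) atTop (nhds 0))
    (hne : blockPt a e ≠ blockPt a f) (p q : ℕ) (hpq : p < q) :
    0 < liminf (fun k : ℕ =>
      dist2 (shift^[k + p] (blockPt a e)) (shift^[k + q] (blockPt a f))) atTop := by
  set u := blockPt a e with hu
  set v := blockPt a f with hv
  set r := q - p with hrdef
  have hr : 1 ≤ r := by omega
  have hq : q = p + r := by omega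
  set N := 40 * r with hN
  set J := N + r with hJ
  set s : ℕ → ℕ := fun n => ∑ i ∈ Finset.range n, 2^(a i) with hs
  have hs_succ : ∀ n, s (n+1) = s n + 2^(a n) := fun n => Finset.sum_range_succ _ n
  have hs_mono : StrictMono s := strictMono_nat_of_lt_succ (fun n => by
    rw [hs_succ n]; have := Nat.one_le_two_pow (n := a n); omega)
  have ha : ∀ n, n + 1 ≤ a n := by
    intro n
    induction n with
    | zero => exact hpos 0
    | succ m ih => have := hmono (show m < m + 1 by omega); omega
  have hbig : ∀ j, J ≤ j → N + r < 2^(a j) := by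
    intro j hj
    have h1 : a j < 2^(a j) := Nat.lt_two_pow_self
    have := ha j
    omega
  have exists_idx : ∀ m : ℕ, ∃ j, s j ≤ m ∧ m < s (j+1) := by
    intro m
    have hP : ∃ j, m < s (j+1) := by
      refine ⟨m, ?_⟩
      have : m + 1 ≤ s (m+1) := by
        calc m + 1 = ∑ i ∈ Finset.range (m+1), 1 := by simp
        _ ≤ s (m+1) := Finset.sum_le_sum (fun i _ => Nat.one_le_two_pow)
      omega
    classical
    set j := Nat.find hP with hjdef
    refine ⟨j, ?_, Nat.find_spec hP⟩
    rcases Nat.eq_zero_or_pos j with h0 | h0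
    · rw [h0]; simp [hs]
    · have := Nat.find_min hP (m := j - 1) (by omega)
      push_neg at this
      have : s j ≤ m := by
        have h2 : j - 1 + 1 = j := by omega
        rw [h2] at this
        exact this
      exact this
  -- main claim
  have claim : ∀ k, s (J+1) ≤ k → ∃ i < N, u (k+p+i) ≠ v (k+q+i) := by
    intro k hk
    by_contra hcon
    push_neg at hcon
    obtain ⟨j0, hj0l, hj0u⟩ := exists_idx (k+p)
    have hj0J : J + 1 ≤ j0 := by
      by_contra hlt
      have : s (j0+1) ≤ s (J+1) := hs_mono.monotone (by omega)
      omega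
    have hbig0 : N + r < 2^(a j0) := hbig j0 (by omega)
    have hbig1 : N + r < 2^(a (j0+1)) := hbig (j0+1) (by omega)
    set b := s (j0+1) with hb
    have hbval : b = s j0 + 2^(a j0) := hs_succ j0
    have hs2 : s (j0+2) = b + 2^(a (j0+1)) := hs_succ (j0+1)
    by_cases hcase : k + q + 18*r ≤ b
    · -- piece 1 : positions m = k+q+t, t < 18r, both in block j0
      apply tm_no_rep2 r hr (k + p - s j0) (xor (e j0) (f j0))
      intro t ht
      have hueq : u (k+p+t) = xor (e j0) (tm (k+p+t - s j0)) :=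
        blockPt_eval a e j0 (k+p+t) (show s j0 ≤ _ by omega) (show _ < s (j0+1) by omega)
      have hveq : v (k+q+t) = xor (f j0) (tm (k+q+t - s j0)) :=
        blockPt_eval a f j0 (k+q+t) (show s j0 ≤ _ by omega) (show _ < s (j0+1) by omega)
      have heq := hcon t (by omega)
      rw [hueq, hveq] at heq
      have h1 : k+p+t - s j0 = (k + p - s j0) + t := by omega
      have h2 : k+q+t - s j0 = (k + p - s j0) + t + r := by omega
      rw [h1, h2] at heq
      exact xor_helper _ _ _ _ heq
    · -- piece 2 : positions (in u-frame) b + t, t < 18r, in block j0+1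
      apply tm_no_rep2 r hr 0 (xor (e (j0+1)) (f (j0+1)))
      intro t ht
      have hblt : k + p < b := hj0u
      have hueq : u (b + t) = xor (e (j0+1)) (tm (b + t - s (j0+1))) :=
        blockPt_eval a e (j0+1) (b+t) (show s (j0+1) ≤ _ by omega) (show _ < s (j0+2) by omega)
      have hveq : v (b + r + t) = xor (f (j0+1)) (tm (b + r + t - s (j0+1))) :=
        blockPt_eval a f (j0+1) (b+r+t) (show s (j0+1) ≤ _ by omega) (show _ < s (j0+2) by omega)
      have hi : b + r + t = k + q + (b + r + t - k - q) := by omega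
      have heq := hcon (b + r + t - k - q) (by omega)
      rw [show k + p + (b + r + t - k - q) = b + t by omega,
          show k + q + (b + r + t - k - q) = b + r + t by omega] at heq
      rw [hueq, hveq] at heq
      rw [show b + t - s (j0+1) = t by omega, show b + r + t - s (j0+1) = t + r by omega] at heq
      have := xor_helper _ _ _ _ heq
      simpa using this
  -- conclude
  have hev : ∀ᶠ k in atTop, ((1:ℝ)/2)^N ≤ dist2 (shift^[k+p] u) (shift^[k+q] v) := by
    rw [eventually_atTop]
    refine ⟨s (J+1), fun k hk => ?_⟩
    obtain ⟨i, hiN, hneq⟩ := claim k hk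
    have : shift^[k+p] u i ≠ shift^[k+q] v i := by
      rw [shift_iter, shift_iter, show i + (k+p) = k+p+i by omega, show i + (k+q) = k+q+i by omega]
      exact hneq
    calc ((1:ℝ)/2)^N ≤ ((1:ℝ)/2)^(i+1) :=
          pow_le_pow_of_le_one (by norm_num) (by norm_num) (by omega)
      _ ≤ dist2 (shift^[k+p] u) (shift^[k+q] v) := dist2_single _ _ i this
  have hcob : IsCoboundedUnder (· ≥ ·) atTop
      (fun k : ℕ => dist2 (shift^[k+p] u) (shift^[k+q] v)) := by
    apply Filter.IsBoundedUnder.isCoboundedUnder_ge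
    exact ⟨1, eventually_map.2 (Eventually.of_forall (fun k => dist2_le_one _ _))⟩
  have := le_liminf_of_le hcob hev
  calc (0:ℝ) < ((1:ℝ)/2)^N := by positivity
    _ ≤ _ := this
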